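/- arXiv:2102.08941 — 7 statements merged into one kernel-verified Lean document; each statement's English description precedes it below -/
import Mathlib

section
/- Let n' be a positive natural number, K, K' positive natural numbers, s : Fin n' → Fin K' a labeling with one-hot matrix S, and h : Fin n' → Fin K a surjective partition assignment with one-hot matrix H and centroid matrix G. Then G is a least-squares optimum: for every matrix C ∈ Matrix (Fin K) (Fin K') ℝ, the squared Frobenius norm satisfies ‖S − H * G‖_F² ≤ ‖S − H * C‖_F². -/
/-- The mean minimizes the sum of squared deviations. -/
lemma mean_min {ι : Type*} (t : Finset ι) (ht : t.Nonempty) (x : ι → ℝ) (c : ℝ) :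
    ∑ i ∈ t, (x i - (∑ i ∈ t, x i) / t.card) ^ 2 ≤ ∑ i ∈ t, (x i - c) ^ 2 := by
  have hn : (0 : ℝ) < t.card := by exact_mod_cast Finset.card_pos.mpr ht
  set g : ℝ := (∑ i ∈ t, x i) / t.card with hg
  have hsum : ∑ i ∈ t, x i = (t.card : ℝ) * g := by
    rw [hg]; field_simp
  have key : ∑ i ∈ t, (x i - c) ^ 2 - ∑ i ∈ t, (x i - g) ^ 2
      = (t.card : ℝ) * (g - c) ^ 2 := by
    rw [← Finset.sum_sub_distrib]
    have h1 : ∀ i ∈ t, (x i - c) ^ 2 - (x i - g) ^ 2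
        = (g - c) * (2 * x i) - (g - c) * (c + g) := by
      intro i _; ring
    rw [Finset.sum_congr rfl h1, Finset.sum_sub_distrib, ← Finset.mul_sum,
      Finset.sum_const, ← Finset.mul_sum, hsum]
    ring
  nlinarith [mul_nonneg hn.le (sq_nonneg (g - c))]

/-- For a labeling `s` with one-hot matrix `S` and a surjective partition
assignment `h` with one-hot matrix `H` and centroid matrix `G`, the centroid matrix is a
least-squares optimum: `‖S − H * G‖_F² ≤ ‖S − H * C‖_F²` for every matrix `C`. -/
theorem centroid_least_squares
    (n' K K' : ℕ) (hn' : 0 < n') (hK : 0 < K) (hK' : 0 < K')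
    (s : Fin n' → Fin K') (h : Fin n' → Fin K) (hsurj : Function.Surjective h)
    (S : Matrix (Fin n') (Fin K') ℝ)
    (hS : ∀ i j, S i j = if s i = j then (1 : ℝ) else 0)
    (H : Matrix (Fin n') (Fin K) ℝ)
    (hH : ∀ i k, H i k = if h i = k then (1 : ℝ) else 0)
    (G : Matrix (Fin K) (Fin K') ℝ)
    (hG : ∀ k j, G k j =
      ((Finset.univ.filter (fun i => h i = k ∧ s i = j)).card : ℝ) /
      ((Finset.univ.filter (fun i => h i = k)).card : ℝ))
    (C : Matrix (Fin K) (Fin K') ℝ) :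
    ∑ i, ∑ j, ((S - H * G) i j) ^ 2 ≤ ∑ i, ∑ j, ((S - H * C) i j) ^ 2 := by
  -- H * M picks row h i of M
  have hmul : ∀ (M : Matrix (Fin K) (Fin K') ℝ) i j, (H * M) i j = M (h i) j := by
    intro M i j
    simp only [Matrix.mul_apply, hH]
    simp
  have hrw : ∀ (M : Matrix (Fin K) (Fin K') ℝ),
      ∑ i, ∑ j, ((S - H * M) i j) ^ 2
        = ∑ k, ∑ j, ∑ i ∈ Finset.univ.filter (fun i => h i = k),
            (S i j - M k j) ^ 2 := by
    intro M
    rw [← Finset.sum_fiberwise (Finset.univ : Finset (Fin n')) h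
      (fun i => ∑ j, ((S - H * M) i j) ^ 2)]
    refine Finset.sum_congr rfl fun k _ => ?_
    rw [Finset.sum_comm]
    refine Finset.sum_congr rfl fun j _ => Finset.sum_congr rfl fun i hi => ?_
    simp only [Finset.mem_filter] at hi
    simp [Matrix.sub_apply, hmul, hi.2]
  rw [hrw G, hrw C]
  refine Finset.sum_le_sum fun k _ => Finset.sum_le_sum fun j _ => ?_
  set t := Finset.univ.filter (fun i => h i = k) with hts
  have htne : t.Nonempty := by
    obtain ⟨i, hi⟩ := hsurj k
    exact ⟨i, by simp [hts, hi]⟩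
  have hGmean : G k j = (∑ i ∈ t, S i j) / t.card := by
    rw [hG]
    congr 1
    · have h1 : ∑ i ∈ t, S i j = ∑ i ∈ t, if s i = j then (1:ℝ) else 0 :=
        Finset.sum_congr rfl fun i _ => hS i j
      rw [h1, Finset.sum_boole, hts, Finset.filter_filter]
  rw [hGmean]
  exact mean_min t htne (fun i => S i j) (C k j)
end

section
/- Let n' be a positive natural number, K, K' positive natural numbers, s : Fin n' → Fin K' a labeling with one-hot matrix S, and h : Fin n' → Fin K a surjective partition assignment with one-hot matrix H and centroid matrix G. Then the squared Frobenius distance from S to its cluster-wise centroid reconstruction satisfies the Pythagorean decomposition ‖S − H * G‖_F² = ‖S‖_F² − Σ_{k=1}^{K} n_{k+} · Σ_{j=1}^{K'} (G k j)². -/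
/-- Pythagorean decomposition of the squared Frobenius distance from the
one-hot matrix `S` to its cluster-wise centroid reconstruction `H * G`:
`‖S − H * G‖_F² = ‖S‖_F² − Σ_k n_{k+} · Σ_j (G k j)²`. -/
theorem centroid_pythagorean_decomposition
    (n' K K' : ℕ) (hn' : 0 < n') (hK : 0 < K) (hK' : 0 < K')
    (s : Fin n' → Fin K') (h : Fin n' → Fin K) (hsurj : Function.Surjective h)
    (S : Matrix (Fin n') (Fin K') ℝ)
    (hS : ∀ i j, S i j = if s i = j then (1 : ℝ) else 0)
    (H : Matrix (Fin n') (Fin K) ℝ)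
    (hH : ∀ i k, H i k = if h i = k then (1 : ℝ) else 0)
    (nk : Fin K → ℕ)
    (hnk : ∀ k, nk k = (Finset.univ.filter (fun i => h i = k)).card)
    (G : Matrix (Fin K) (Fin K') ℝ)
    (hG : ∀ k j, G k j =
      ((Finset.univ.filter (fun i => h i = k ∧ s i = j)).card : ℝ) / (nk k : ℝ)) :
    ∑ i, ∑ j, ((S - H * G) i j) ^ 2 =
      (∑ i, ∑ j, (S i j) ^ 2) - ∑ k, (nk k : ℝ) * ∑ j, (G k j) ^ 2 := by
  have hnkpos : ∀ k, (0:ℝ) < (nk k : ℝ) := by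
    intro k
    obtain ⟨i, hi⟩ := hsurj k
    have : 0 < nk k := by
      rw [hnk]
      exact Finset.card_pos.mpr ⟨i, by simp [hi]⟩
    exact_mod_cast this
  have hHG : ∀ i j, (H * G) i j = G (h i) j := by
    intro i j
    simp only [Matrix.mul_apply, hH]
    rw [Finset.sum_eq_single (h i)]
    · simp
    · intro k _ hk
      simp [Ne.symm hk]
    · simp
  -- n_{kj} = nk k * G k j
  have hcount : ∀ k j,
      ((Finset.univ.filter (fun i => h i = k ∧ s i = j)).card : ℝ) = (nk k : ℝ) * G k j := by
    intro k j
    rw [hG, mul_div_assoc']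
    rw [mul_comm, mul_div_assoc, div_self (hnkpos k).ne', mul_one]
  -- the number of i in fiber of k with S i j summed:
  have hSsum : ∀ k j, (∑ i ∈ Finset.univ.filter (fun i => h i = k), S i j)
      = (nk k : ℝ) * G k j := by
    intro k j
    rw [← hcount k j]
    simp only [hS]
    rw [Finset.sum_boole, Finset.filter_filter]
  -- cross term
  have hA : (∑ i, ∑ j, S i j * G (h i) j) = ∑ k, (nk k : ℝ) * ∑ j, (G k j)^2 := by
    rw [Finset.sum_comm]
    have : ∀ j, (∑ i, S i j * G (h i) j)
        = ∑ k, (nk k : ℝ) * (G k j)^2 := by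
      intro j
      rw [← Finset.sum_fiberwise Finset.univ h (fun i => S i j * G (h i) j)]
      refine Finset.sum_congr rfl fun k _ => ?_
      have : (∑ i ∈ Finset.univ.filter (fun i => h i = k), S i j * G (h i) j)
          = (∑ i ∈ Finset.univ.filter (fun i => h i = k), S i j) * G k j := by
        rw [Finset.sum_mul]
        refine Finset.sum_congr rfl fun i hi => ?_
        rw [(Finset.mem_filter.mp hi).2]
      rw [this, hSsum, mul_assoc, sq]
    simp_rw [this]
    rw [Finset.sum_comm]
    simp_rw [← Finset.mul_sum]
  -- squared centroid term
  have hB : (∑ i, ∑ j, (G (h i) j)^2) = ∑ k, (nk k : ℝ) * ∑ j, (G k j)^2 := by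
    rw [← Finset.sum_fiberwise Finset.univ h (fun i => ∑ j, (G (h i) j)^2)]
    refine Finset.sum_congr rfl fun k _ => ?_
    have : (∑ i ∈ Finset.univ.filter (fun i => h i = k), ∑ j, (G (h i) j)^2)
        = ∑ i ∈ Finset.univ.filter (fun i => h i = k), ∑ j, (G k j)^2 := by
      refine Finset.sum_congr rfl fun i hi => ?_
      rw [(Finset.mem_filter.mp hi).2]
    rw [this, Finset.sum_const, nsmul_eq_mul, hnk]
  calc ∑ i, ∑ j, ((S - H * G) i j) ^ 2
      = ∑ i, ∑ j, ((S i j)^2 - 2 * (S i j * G (h i) j) + (G (h i) j)^2) := by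
        refine Finset.sum_congr rfl fun i _ => Finset.sum_congr rfl fun j _ => ?_
        simp only [Matrix.sub_apply, hHG]
        ring
    _ = (∑ i, ∑ j, (S i j)^2) - 2 * (∑ i, ∑ j, S i j * G (h i) j)
          + (∑ i, ∑ j, (G (h i) j)^2) := by
        simp [Finset.sum_add_distrib, Finset.sum_sub_distrib, Finset.mul_sum]
    _ = (∑ i, ∑ j, (S i j) ^ 2) - ∑ k, (nk k : ℝ) * ∑ j, (G k j) ^ 2 := by
        rw [hA, hB]; ring
end

section
/- (Main Lemma) Let n' be a positive natural number, K, K' positive natural numbers, s : Fin n' → Fin K' a labeling with one-hot matrix S, and h : Fin n' → Fin K a surjective partition assignment with one-hot matrix H and centroid matrix G. Then the category utility function satisfies U_c = −(1/n') · ‖S − H * G‖_F² + (1 − Σ_{j=1}^{K'} (p_{+j})²); in particular, U_c equals −‖S − H * G‖_F² up to an affine rescaling whose constants depend only on s (not on h), so for fixed side information S, maximizing U_c over partitions is a K-means problem with squared Euclidean distance. -/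
/-- **Main Lemma.** The category utility function satisfies
`U_c = −(1/n') · ‖S − H * G‖_F² + (1 − Σ_j (p_{+j})²)`; the affine constants depend only on
the labeling `s`, so maximizing `U_c` over partitions is a K-means problem with squared
Euclidean distance. -/
theorem category_utility_eq_neg_kmeans_objective
    (n' K K' : ℕ) (hn' : 0 < n') (hK : 0 < K) (hK' : 0 < K')
    (s : Fin n' → Fin K') (h : Fin n' → Fin K) (hsurj : Function.Surjective h)
    (S : Matrix (Fin n') (Fin K') ℝ)
    (hS : ∀ i j, S i j = if s i = j then (1 : ℝ) else 0)
    (H : Matrix (Fin n') (Fin K) ℝ)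
    (hH : ∀ i k, H i k = if h i = k then (1 : ℝ) else 0)
    (nkj : Fin K → Fin K' → ℕ)
    (hnkj : ∀ k j, nkj k j = (Finset.univ.filter (fun i => h i = k ∧ s i = j)).card)
    (nk : Fin K → ℕ)
    (hnk : ∀ k, nk k = (Finset.univ.filter (fun i => h i = k)).card)
    (nj : Fin K' → ℕ)
    (hnj : ∀ j, nj j = (Finset.univ.filter (fun i => s i = j)).card)
    (G : Matrix (Fin K) (Fin K') ℝ)
    (hG : ∀ k j, G k j = (nkj k j : ℝ) / (nk k : ℝ))
    (pkj : Fin K → Fin K' → ℝ)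
    (hpkj : ∀ k j, pkj k j = (nkj k j : ℝ) / (n' : ℝ))
    (pk : Fin K → ℝ)
    (hpk : ∀ k, pk k = (nk k : ℝ) / (n' : ℝ))
    (pj : Fin K' → ℝ)
    (hpj : ∀ j, pj j = (nj j : ℝ) / (n' : ℝ))
    (Uc : ℝ)
    (hUc : Uc = (∑ k, pk k * ∑ j, (pkj k j / pk k) ^ 2) - ∑ j, (pj j) ^ 2) :
    Uc = -(1 / (n' : ℝ)) * (∑ i, ∑ j, ((S - H * G) i j) ^ 2)
          + (1 - ∑ j, (pj j) ^ 2) := by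
  have hn0 : (n' : ℝ) ≠ 0 := Nat.cast_ne_zero.mpr hn'.ne'
  have hnk0 : ∀ k, (nk k : ℝ) ≠ 0 := by
    intro k
    obtain ⟨i, hi⟩ := hsurj k
    have : 0 < nk k := by
      rw [hnk]
      exact Finset.card_pos.mpr ⟨i, Finset.mem_filter.mpr ⟨Finset.mem_univ i, hi⟩⟩
    exact_mod_cast this.ne'
  -- fiberwise summation
  have key : ∀ f : Fin K → Fin K' → ℝ,
      ∑ i, f (h i) (s i) = ∑ k, ∑ j, (nkj k j : ℝ) * f k j := by
    intro f
    have hfib := Finset.sum_fiberwise_of_maps_to (s := (Finset.univ : Finset (Fin n')))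
      (t := (Finset.univ : Finset (Fin K × Fin K'))) (g := fun i => (h i, s i))
      (fun x _ => Finset.mem_univ _) (fun i => f (h i) (s i))
    rw [← hfib, Fintype.sum_prod_type]
    refine Finset.sum_congr rfl fun k _ => Finset.sum_congr rfl fun j _ => ?_
    have hset : (Finset.univ.filter (fun i => (h i, s i) = (k, j)))
        = Finset.univ.filter (fun i => h i = k ∧ s i = j) := by
      apply Finset.filter_congr
      intro i _
      simp [Prod.ext_iff]
    rw [hset, hnkj]
    rw [Finset.sum_congr rfl (fun i hi => ?_), Finset.sum_const, nsmul_eq_mul]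
    simp only [Finset.mem_filter] at hi
    rw [hi.2.1, hi.2.2]
  have hnksum : ∀ k, (nk k : ℝ) = ∑ j, (nkj k j : ℝ) := by
    intro k
    rw [hnk]
    rw [Finset.card_eq_sum_card_fiberwise (f := s)
      (t := (Finset.univ : Finset (Fin K'))) (fun x _ => Finset.mem_univ _)]
    push_cast
    refine Finset.sum_congr rfl fun j _ => ?_
    rw [hnkj, Finset.filter_filter]
  -- matrix entry
  have hentry : ∀ i j, (S - H * G) i j = (if s i = j then (1:ℝ) else 0) - G (h i) j := by
    intro i j
    simp [Matrix.sub_apply, Matrix.mul_apply, hS, hH, ite_mul]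
  -- row sums
  have hrow : ∀ i, ∑ j, ((S - H * G) i j) ^ 2
      = 1 - 2 * G (h i) (s i) + ∑ j, (G (h i) j) ^ 2 := by
    intro i
    simp only [hentry]
    have : ∀ j, ((if s i = j then (1:ℝ) else 0) - G (h i) j) ^ 2
        = (if s i = j then (1:ℝ) else 0) - 2 * ((if s i = j then (1:ℝ) else 0) * G (h i) j)
          + (G (h i) j) ^ 2 := by
      intro j
      split <;> ring
    simp only [this]
    rw [Finset.sum_add_distrib, Finset.sum_sub_distrib]
    congr 1
    congr 1
    · simp
    · rw [← Finset.mul_sum]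
      congr 1
      simp
  set T : ℝ := ∑ k, ∑ j, (nkj k j : ℝ) ^ 2 / (nk k : ℝ) with hT
  have hA : (∑ i, ∑ j, ((S - H * G) i j) ^ 2) = (n' : ℝ) - T := by
    simp only [hrow]
    rw [Finset.sum_add_distrib, Finset.sum_sub_distrib, Finset.sum_const, Finset.card_univ,
      Fintype.card_fin, nsmul_eq_mul, mul_one, ← Finset.mul_sum]
    rw [key (fun k j => G k j), key (fun k _ => ∑ j, (G k j) ^ 2)]
    have e1 : ∑ k, ∑ j, (nkj k j : ℝ) * G k j = T := by
      refine Finset.sum_congr rfl fun k _ => Finset.sum_congr rfl fun j _ => ?_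
      rw [hG]
      ring
    have e2 : ∑ k, ∑ j, (nkj k j : ℝ) * ∑ j', (G k j') ^ 2 = T := by
      refine Finset.sum_congr rfl fun k _ => ?_
      rw [← Finset.sum_mul, ← hnksum, Finset.mul_sum]
      refine Finset.sum_congr rfl fun j _ => ?_
      rw [hG]
      have := hnk0 k
      field_simp [sq]
    rw [e1, e2]
    ring
  have hU : Uc = (1 / (n' : ℝ)) * T - ∑ j, (pj j) ^ 2 := by
    rw [hUc, hT, Finset.mul_sum]
    congr 1
    refine Finset.sum_congr rfl fun k _ => ?_
    rw [hpk, Finset.mul_sum, Finset.mul_sum]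
    refine Finset.sum_congr rfl fun j _ => ?_
    rw [hpkj]
    have := hnk0 k
    field_simp
  rw [hU, hA]
  field_simp
  ring
end

section
/- Let n' be a positive natural number, K, K' positive natural numbers, s : Fin n' → Fin K' a labeling, and h : Fin n' → Fin K a surjective partition assignment. Then the category utility function is bounded above by the constant depending only on s: U_c ≤ 1 − Σ_{j=1}^{K'} (p_{+j})². -/
/-- The category utility function is bounded above by the constant
depending only on the labeling: `U_c ≤ 1 − Σ_j (p_{+j})²`. -/
theorem category_utility_upper_bound
    (n' K K' : ℕ) (hn' : 0 < n') (hK : 0 < K) (hK' : 0 < K')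
    (s : Fin n' → Fin K') (h : Fin n' → Fin K) (hsurj : Function.Surjective h)
    (nkj : Fin K → Fin K' → ℕ)
    (hnkj : ∀ k j, nkj k j = (Finset.univ.filter (fun i => h i = k ∧ s i = j)).card)
    (nk : Fin K → ℕ)
    (hnk : ∀ k, nk k = (Finset.univ.filter (fun i => h i = k)).card)
    (nj : Fin K' → ℕ)
    (hnj : ∀ j, nj j = (Finset.univ.filter (fun i => s i = j)).card)
    (pkj : Fin K → Fin K' → ℝ)
    (hpkj : ∀ k j, pkj k j = (nkj k j : ℝ) / (n' : ℝ))
    (pk : Fin K → ℝ)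
    (hpk : ∀ k, pk k = (nk k : ℝ) / (n' : ℝ))
    (pj : Fin K' → ℝ)
    (hpj : ∀ j, pj j = (nj j : ℝ) / (n' : ℝ))
    (Uc : ℝ)
    (hUc : Uc = (∑ k, pk k * ∑ j, (pkj k j / pk k) ^ 2) - ∑ j, (pj j) ^ 2) :
    Uc ≤ 1 - ∑ j, (pj j) ^ 2 := by
  have hn'R : (0:ℝ) < (n' : ℝ) := by exact_mod_cast hn'
  have hnkpos : ∀ k, 0 < nk k := by
    intro k
    rw [hnk]
    obtain ⟨i, hi⟩ := hsurj k
    exact Finset.card_pos.mpr ⟨i, by simp [hi]⟩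
  have hpkpos : ∀ k, 0 < pk k := by
    intro k
    rw [hpk]
    exact div_pos (by exact_mod_cast hnkpos k) hn'R
  have hsum_j : ∀ k, ∑ j, (nkj k j : ℝ) = (nk k : ℝ) := by
    intro k
    have hc : ∑ j, nkj k j = nk k := by
      rw [hnk]
      rw [Finset.card_eq_sum_card_fiberwise (f := s) (t := Finset.univ)
        (fun x _ => Finset.mem_univ _)]
      refine Finset.sum_congr rfl fun j _ => ?_
      rw [hnkj, Finset.filter_filter]
    exact_mod_cast hc
  have hsum_pkj : ∀ k, ∑ j, pkj k j = pk k := by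
    intro k
    simp_rw [hpkj, hpk]
    rw [← Finset.sum_div, hsum_j]
  have hsum_k : ∑ k, pk k = 1 := by
    have hc : ∑ k, nk k = n' := by
      simp_rw [hnk]
      have := (Finset.card_eq_sum_card_fiberwise (f := h)
        (s := (Finset.univ : Finset (Fin n'))) (t := Finset.univ)
        (fun x _ => Finset.mem_univ _)).symm
      simpa using this
    simp_rw [hpk]
    rw [← Finset.sum_div]
    rw [show ∑ k, (nk k : ℝ) = (n' : ℝ) by exact_mod_cast hc]
    exact div_self hn'R.ne'
  have hpkjnn : ∀ k j, 0 ≤ pkj k j := fun k j => by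
    rw [hpkj]; positivity
  have hinner : ∀ k, ∑ j, (pkj k j / pk k) ^ 2 ≤ 1 := by
    intro k
    have hr_sum : ∑ j, pkj k j / pk k = 1 := by
      rw [← Finset.sum_div, hsum_pkj k]
      exact div_self (hpkpos k).ne'
    have hrnn : ∀ j, 0 ≤ pkj k j / pk k := fun j =>
      div_nonneg (hpkjnn k j) (hpkpos k).le
    have hrle : ∀ j, pkj k j / pk k ≤ 1 := by
      intro j
      rw [← hr_sum]
      exact Finset.single_le_sum (fun j' _ => hrnn j') (Finset.mem_univ j)
    calc ∑ j, (pkj k j / pk k) ^ 2 ≤ ∑ j, pkj k j / pk k := by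
          refine Finset.sum_le_sum fun j _ => ?_
          nlinarith [hrnn j, hrle j]
      _ = 1 := hr_sum
  have hmain : ∑ k, pk k * ∑ j, (pkj k j / pk k) ^ 2 ≤ 1 := by
    calc ∑ k, pk k * ∑ j, (pkj k j / pk k) ^ 2
        ≤ ∑ k, pk k * 1 := by
          refine Finset.sum_le_sum fun k _ => ?_
          exact mul_le_mul_of_nonneg_left (hinner k) (hpkpos k).le
      _ = 1 := by simp [hsum_k]
  rw [hUc]
  linarith
end

section
/- Let n' be a positive natural number, K, K' positive natural numbers, s : Fin n' → Fin K' a labeling, and h : Fin n' → Fin K a surjective partition assignment. Then the category utility function attains its maximum value, U_c = 1 − Σ_{j=1}^{K'} (p_{+j})², if and only if every cluster of h is pure with respect to s, i.e., for all i, i' : Fin n', h i = h i' implies s i = s i'. -/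
/-- Auxiliary: for naturals, `(∑ a)² = ∑ a²` iff `a` has at most one nonzero value. -/
lemma sq_sum_eq_sum_sq_iff {m : ℕ} (a : Fin m → ℕ) :
    (∑ j, a j) ^ 2 = ∑ j, (a j) ^ 2 ↔ ∀ j j', a j ≠ 0 → a j' ≠ 0 → j = j' := by
  have expand : (∑ j, a j) ^ 2
      = ∑ j, (a j) ^ 2 + ∑ j, ∑ j' ∈ Finset.univ.erase j, a j * a j' := by
    rw [sq, Finset.sum_mul_sum, ← Finset.sum_add_distrib]
    refine Finset.sum_congr rfl fun j _ => ?_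
    rw [sq, ← Finset.add_sum_erase _ _ (Finset.mem_univ j)]
  constructor
  · intro heq j j' hj hj'
    by_contra hne
    have hzero : ∑ j, ∑ j' ∈ Finset.univ.erase j, a j * a j' = 0 := by omega
    rw [Finset.sum_eq_zero_iff] at hzero
    have h1 := hzero j (Finset.mem_univ j)
    rw [Finset.sum_eq_zero_iff] at h1
    have h2 := h1 j' (Finset.mem_erase.mpr ⟨Ne.symm hne, Finset.mem_univ _⟩)
    rcases Nat.mul_eq_zero.mp h2 with h3 | h3 <;> tauto
  · intro hp
    rw [expand]
    have hz : ∑ j, ∑ j' ∈ Finset.univ.erase j, a j * a j' = 0 := by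
      apply Finset.sum_eq_zero; intro j _
      apply Finset.sum_eq_zero; intro j' hj'
      rcases Nat.eq_zero_or_pos (a j) with h0 | h0
      · simp [h0]
      rcases Nat.eq_zero_or_pos (a j') with h1 | h1
      · simp [h1]
      exact absurd (hp j j' h0.ne' h1.ne').symm (Finset.mem_erase.mp hj').1
    omega

/-- Auxiliary: `∑ a² ≤ (∑ a)²` for naturals. -/
lemma sum_sq_le_sq_sum {m : ℕ} (a : Fin m → ℕ) :
    ∑ j, (a j) ^ 2 ≤ (∑ j, a j) ^ 2 := by
  calc ∑ j, (a j) ^ 2 ≤ ∑ j, a j * ∑ j', a j' :=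
        Finset.sum_le_sum fun j _ => by
          rw [sq]
          exact Nat.mul_le_mul_left _
            (Finset.single_le_sum (fun _ _ => Nat.zero_le _) (Finset.mem_univ j))
    _ = (∑ j, a j) ^ 2 := by rw [← Finset.sum_mul, sq]

/-- The category utility function attains its maximal value
`1 − Σ_j (p_{+j})²` if and only if every cluster of `h` is pure with respect to `s`,
i.e., `h i = h i'` implies `s i = s i'`. -/
theorem category_utility_max_iff_pure_clusters
    (n' K K' : ℕ) (hn' : 0 < n') (hK : 0 < K) (hK' : 0 < K')
    (s : Fin n' → Fin K') (h : Fin n' → Fin K) (hsurj : Function.Surjective h)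
    (nkj : Fin K → Fin K' → ℕ)
    (hnkj : ∀ k j, nkj k j = (Finset.univ.filter (fun i => h i = k ∧ s i = j)).card)
    (nk : Fin K → ℕ)
    (hnk : ∀ k, nk k = (Finset.univ.filter (fun i => h i = k)).card)
    (nj : Fin K' → ℕ)
    (hnj : ∀ j, nj j = (Finset.univ.filter (fun i => s i = j)).card)
    (pkj : Fin K → Fin K' → ℝ)
    (hpkj : ∀ k j, pkj k j = (nkj k j : ℝ) / (n' : ℝ))
    (pk : Fin K → ℝ)
    (hpk : ∀ k, pk k = (nk k : ℝ) / (n' : ℝ))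
    (pj : Fin K' → ℝ)
    (hpj : ∀ j, pj j = (nj j : ℝ) / (n' : ℝ))
    (Uc : ℝ)
    (hUc : Uc = (∑ k, pk k * ∑ j, (pkj k j / pk k) ^ 2) - ∑ j, (pj j) ^ 2) :
    Uc = 1 - ∑ j, (pj j) ^ 2 ↔ ∀ i i' : Fin n', h i = h i' → s i = s i' := by
  have hN0 : (0:ℝ) < (n' : ℝ) := by exact_mod_cast hn'
  have hnkpos : ∀ k, 0 < nk k := by
    intro k
    rw [hnk]
    obtain ⟨i, hi⟩ := hsurj k
    exact Finset.card_pos.mpr ⟨i, by simp [hi]⟩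
  have hnkR : ∀ k, (0:ℝ) < (nk k : ℝ) := fun k => by exact_mod_cast hnkpos k
  have hnk_sum : ∀ k, nk k = ∑ j, nkj k j := by
    intro k
    rw [hnk, Finset.card_eq_sum_card_fiberwise (f := s) (t := Finset.univ)
      (fun i _ => Finset.mem_univ _)]
    refine Finset.sum_congr rfl fun j _ => ?_
    rw [hnkj, Finset.filter_filter]
  have hn_sum : ∑ k, nk k = n' := by
    have := Finset.card_eq_sum_card_fiberwise (f := h) (s := Finset.univ)
      (t := Finset.univ) (fun i _ => Finset.mem_univ _)
    simp only [Finset.card_univ, Fintype.card_fin] at this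
    rw [this]
    exact Finset.sum_congr rfl fun k _ => hnk k
  -- purity as a condition on the counts
  have hpure_iff : (∀ i i' : Fin n', h i = h i' → s i = s i') ↔
      ∀ k, ∀ j j' : Fin K', nkj k j ≠ 0 → nkj k j' ≠ 0 → j = j' := by
    constructor
    · intro hp k j j' hj hj'
      rw [hnkj] at hj hj'
      obtain ⟨i, hi⟩ := Finset.card_pos.mp (Nat.pos_of_ne_zero hj)
      obtain ⟨i', hi'⟩ := Finset.card_pos.mp (Nat.pos_of_ne_zero hj')
      simp only [Finset.mem_filter, Finset.mem_univ, true_and] at hi hi'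
      have := hp i i' (hi.1.trans hi'.1.symm)
      rw [hi.2, hi'.2] at this
      exact this
    · intro hp i i' hii
      have h1 : nkj (h i) (s i) ≠ 0 := by
        rw [hnkj]
        exact (Finset.card_pos.mpr ⟨i, by simp⟩).ne'
      have h2 : nkj (h i) (s i') ≠ 0 := by
        rw [hnkj]
        exact (Finset.card_pos.mpr ⟨i', by simp [hii.symm]⟩).ne'
      exact hp (h i) _ _ h1 h2
  -- rewrite each summand of Uc
  have hterm : ∀ k, pk k * ∑ j, (pkj k j / pk k) ^ 2
      = (∑ j, ((nkj k j : ℝ)) ^ 2) / ((n' : ℝ) * (nk k : ℝ)) := by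
    intro k
    have hratio : ∀ j, pkj k j / pk k = (nkj k j : ℝ) / (nk k : ℝ) := by
      intro j
      rw [hpkj, hpk]
      field_simp
    simp only [hratio]
    rw [hpk, Finset.mul_sum, Finset.sum_div]
    refine Finset.sum_congr rfl fun j _ => ?_
    have hk0 := (hnkR k).ne'
    have hn0 := hN0.ne'
    field_simp
  have hone : (1:ℝ) = ∑ k, ((nk k : ℝ)) ^ 2 / ((n' : ℝ) * (nk k : ℝ)) := by
    have heq : ∀ k, ((nk k : ℝ)) ^ 2 / ((n' : ℝ) * (nk k : ℝ)) = (nk k : ℝ) / (n' : ℝ) := by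
      intro k
      have hk0 := (hnkR k).ne'
      have hn0 := hN0.ne'
      field_simp
    rw [Finset.sum_congr rfl fun k _ => heq k, ← Finset.sum_div]
    rw [show (∑ k, (nk k : ℝ)) = (n' : ℝ) by exact_mod_cast congrArg (Nat.cast : ℕ → ℝ) hn_sum]
    field_simp
  rw [hUc, sub_left_inj]
  rw [Finset.sum_congr rfl fun k _ => hterm k, hone]
  -- termwise comparison
  have hle : ∀ k ∈ (Finset.univ : Finset (Fin K)),
      (∑ j, ((nkj k j : ℝ)) ^ 2) / ((n' : ℝ) * (nk k : ℝ))
      ≤ ((nk k : ℝ)) ^ 2 / ((n' : ℝ) * (nk k : ℝ)) := by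
    intro k _
    have hc : (0:ℝ) < (n' : ℝ) * (nk k : ℝ) := mul_pos hN0 (hnkR k)
    refine (div_le_div_iff_of_pos_right hc).mpr ?_
    have hnat : ∑ j, (nkj k j) ^ 2 ≤ (nk k) ^ 2 := by
      rw [hnk_sum k]; exact sum_sq_le_sq_sum (nkj k)
    exact_mod_cast hnat
  rw [Finset.sum_eq_sum_iff_of_le hle, hpure_iff]
  constructor
  · intro he k j j' hj hj'
    have hk := he k (Finset.mem_univ k)
    have hc : ((n' : ℝ) * (nk k : ℝ)) ≠ 0 := (mul_pos hN0 (hnkR k)).ne'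
    have h2 : (∑ j, ((nkj k j : ℝ)) ^ 2) = ((nk k : ℝ)) ^ 2 := (div_left_inj' hc).mp hk
    have h3 : ∑ j, (nkj k j) ^ 2 = (nk k) ^ 2 := by exact_mod_cast h2
    rw [hnk_sum k] at h3
    exact (sq_sum_eq_sum_sq_iff (nkj k)).mp h3.symm j j' hj hj'
  · intro hp k _
    have h3 : (∑ j, nkj k j) ^ 2 = ∑ j, (nkj k j) ^ 2 :=
      (sq_sum_eq_sum_sq_iff (nkj k)).mpr (hp k)
    rw [← hnk_sum k] at h3
    have h2 : (∑ j, ((nkj k j : ℝ)) ^ 2) = ((nk k : ℝ)) ^ 2 := by exact_mod_cast h3.symm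
    rw [h2]
end

section
/- Let n' be a positive natural number, K, K' positive natural numbers, and s : Fin n' → Fin K' a labeling. For any two surjective partition assignments h¹ : Fin n' → Fin K and h² : Fin n' → Fin K with one-hot matrices H¹, H² and centroid matrices G¹, G² respectively, one has U_c(h¹) ≥ U_c(h²) if and only if ‖S − H¹ * G¹‖_F² ≤ ‖S − H² * G²‖_F²; i.e., maximizing the category utility function over partitions of the data is equivalent to minimizing the squared Frobenius distance of the one-hot side-information matrix S to its cluster-wise centroid reconstruction. -/
open Finset

private lemma frob_eq
    {n' K K' : ℕ} (s : Fin n' → Fin K') (h : Fin n' → Fin K)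
    (S : Matrix (Fin n') (Fin K') ℝ)
    (hS : ∀ i j, S i j = if s i = j then (1 : ℝ) else 0)
    (H : Matrix (Fin n') (Fin K) ℝ)
    (hH : ∀ i k, H i k = if h i = k then (1 : ℝ) else 0)
    (G : Matrix (Fin K) (Fin K') ℝ)
    (hG : ∀ k j, G k j =
      ((Finset.univ.filter (fun i => h i = k ∧ s i = j)).card : ℝ) /
      ((Finset.univ.filter (fun i => h i = k)).card : ℝ))
    (hMpos : ∀ k : Fin K, 0 < (Finset.univ.filter (fun i => h i = k)).card) :
    ∑ i, ∑ j, ((S - H * G) i j) ^ 2 =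
      (n' : ℝ) - ∑ k, ∑ j,
        ((Finset.univ.filter (fun i => h i = k ∧ s i = j)).card : ℝ) ^ 2 /
        ((Finset.univ.filter (fun i => h i = k)).card : ℝ) := by
  have hHG : ∀ i j, (H * G) i j = G (h i) j := by
    intro i j
    simp only [Matrix.mul_apply, hH, ite_mul, one_mul, zero_mul, Finset.sum_ite_eq,
      Finset.mem_univ, if_true]
  have inner : ∀ i, ∑ j, ((S - H * G) i j) ^ 2 =
      1 - 2 * G (h i) (s i) + ∑ j, (G (h i) j) ^ 2 := by
    intro i
    have step : ∀ j, ((S - H * G) i j) ^ 2 =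
        (if s i = j then (1:ℝ) else 0) - (if s i = j then 2 * G (h i) j else 0)
          + (G (h i) j) ^ 2 := by
      intro j
      rw [Matrix.sub_apply, hHG, hS]
      by_cases hj : s i = j <;> simp [hj] <;> ring
    rw [Finset.sum_congr rfl (fun j _ => step j)]
    rw [Finset.sum_add_distrib, Finset.sum_sub_distrib, Finset.sum_ite_eq,
      Finset.sum_ite_eq]
    simp
  rw [Finset.sum_congr rfl (fun i _ => inner i)]
  -- fiberwise over h
  rw [← Finset.sum_fiberwise_of_maps_to (fun i _ => Finset.mem_univ (h i))
    (fun i => 1 - 2 * G (h i) (s i) + ∑ j, (G (h i) j) ^ 2)]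
  have fiber_eq : ∀ k : Fin K,
      ∑ i ∈ Finset.univ.filter (fun i => h i = k),
        (1 - 2 * G (h i) (s i) + ∑ j, (G (h i) j) ^ 2) =
      ((Finset.univ.filter (fun i => h i = k)).card : ℝ) -
        ∑ j, ((Finset.univ.filter (fun i => h i = k ∧ s i = j)).card : ℝ) ^ 2 /
          ((Finset.univ.filter (fun i => h i = k)).card : ℝ) := by
    intro k
    have hM : ((Finset.univ.filter (fun i => h i = k)).card : ℝ) ≠ 0 := by
      exact_mod_cast (hMpos k).ne'
    have hcongr : ∀ i ∈ Finset.univ.filter (fun i => h i = k),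
        (1 - 2 * G (h i) (s i) + ∑ j, (G (h i) j) ^ 2) =
        (1 - 2 * G k (s i) + ∑ j, (G k j) ^ 2) := by
      intro i hi
      rw [(Finset.mem_filter.mp hi).2]
    rw [Finset.sum_congr rfl hcongr, Finset.sum_add_distrib, Finset.sum_sub_distrib,
      Finset.sum_const, Finset.sum_const]
    -- middle term fiberwise over s
    have hmid : ∑ i ∈ Finset.univ.filter (fun i => h i = k), 2 * G k (s i) =
        ∑ j, ((Finset.univ.filter (fun i => h i = k ∧ s i = j)).card : ℝ) * (2 * G k j) := by
      rw [← Finset.sum_fiberwise_of_maps_to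
        (fun i _ => Finset.mem_univ (s i)) (fun i => 2 * G k (s i))]
      refine Finset.sum_congr rfl fun j _ => ?_
      have : ∀ i ∈ (Finset.univ.filter (fun i => h i = k)).filter (fun i => s i = j),
          2 * G k (s i) = 2 * G k j := by
        intro i hi
        rw [(Finset.mem_filter.mp hi).2]
      rw [Finset.sum_congr rfl this, Finset.sum_const, Finset.filter_filter]
      simp [nsmul_eq_mul]
    rw [hmid]
    have hNj : ∀ j : Fin K',
        ((Finset.univ.filter (fun i => h i = k ∧ s i = j)).card : ℝ) * (2 * G k j) =
        2 * (((Finset.univ.filter (fun i => h i = k ∧ s i = j)).card : ℝ) ^ 2 /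
          ((Finset.univ.filter (fun i => h i = k)).card : ℝ)) := by
      intro j
      rw [hG]
      field_simp
    have hsum2 : ∑ j, ((Finset.univ.filter (fun i => h i = k ∧ s i = j)).card : ℝ) * (2 * G k j)
        = 2 * ((∑ j, ((Finset.univ.filter (fun i => h i = k ∧ s i = j)).card : ℝ) ^ 2) /
          ((Finset.univ.filter (fun i => h i = k)).card : ℝ)) := by
      rw [Finset.sum_congr rfl (fun j _ => hNj j), ← Finset.mul_sum, ← Finset.sum_div]
    have hsum3 : ∑ j, (G k j) ^ 2
        = (∑ j, ((Finset.univ.filter (fun i => h i = k ∧ s i = j)).card : ℝ) ^ 2) /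
          ((Finset.univ.filter (fun i => h i = k)).card : ℝ) ^ 2 := by
      rw [Finset.sum_div]
      refine Finset.sum_congr rfl fun j _ => ?_
      rw [hG, div_pow]
    rw [hsum2, hsum3, ← Finset.sum_div]
    simp only [nsmul_eq_mul, mul_one]
    field_simp
    ring
  rw [Finset.sum_congr rfl (fun k _ => fiber_eq k), Finset.sum_sub_distrib]
  congr 1
  rw [← Nat.cast_sum]
  congr 1
  rw [← Finset.card_eq_sum_card_fiberwise
    (fun i (_ : i ∈ Finset.univ) => Finset.mem_univ (h i))]
  simp

private lemma uc_sum_eq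
    {n' K K' : ℕ} (hn' : 0 < n') (s : Fin n' → Fin K') (h : Fin n' → Fin K)
    (hMpos : ∀ k : Fin K, 0 < (Finset.univ.filter (fun i => h i = k)).card) :
    ∑ k, (((Finset.univ.filter (fun i => h i = k)).card : ℝ) / (n' : ℝ)) *
        ∑ j, ((((Finset.univ.filter (fun i => h i = k ∧ s i = j)).card : ℝ) / (n' : ℝ)) /
          (((Finset.univ.filter (fun i => h i = k)).card : ℝ) / (n' : ℝ))) ^ 2
      = (∑ k, ∑ j, ((Finset.univ.filter (fun i => h i = k ∧ s i = j)).card : ℝ) ^ 2 /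
          ((Finset.univ.filter (fun i => h i = k)).card : ℝ)) / (n' : ℝ) := by
  have hn : ((n' : ℝ)) ≠ 0 := by positivity
  rw [Finset.sum_div]
  refine Finset.sum_congr rfl fun k _ => ?_
  have hM : ((Finset.univ.filter (fun i => h i = k)).card : ℝ) ≠ 0 := by
    exact_mod_cast (hMpos k).ne'
  rw [Finset.sum_div, Finset.mul_sum]
  refine Finset.sum_congr rfl fun j _ => ?_
  field_simp

/-- For two surjective partition assignments `h¹, h²` of the same data with
one-hot matrices `H¹, H²` and centroid matrices `G¹, G²`, one has `U_c(h¹) ≥ U_c(h²)` iff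
`‖S − H¹ * G¹‖_F² ≤ ‖S − H² * G²‖_F²`: maximizing the category utility is equivalent to
minimizing the squared Frobenius distance of `S` to its cluster-wise centroid
reconstruction. -/
theorem category_utility_ge_iff_frobenius_le
    (n' K K' : ℕ) (hn' : 0 < n') (hK : 0 < K) (hK' : 0 < K')
    (s : Fin n' → Fin K')
    (h₁ h₂ : Fin n' → Fin K)
    (hsurj₁ : Function.Surjective h₁) (hsurj₂ : Function.Surjective h₂)
    (S : Matrix (Fin n') (Fin K') ℝ)
    (hS : ∀ i j, S i j = if s i = j then (1 : ℝ) else 0)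
    (H₁ H₂ : Matrix (Fin n') (Fin K) ℝ)
    (hH₁ : ∀ i k, H₁ i k = if h₁ i = k then (1 : ℝ) else 0)
    (hH₂ : ∀ i k, H₂ i k = if h₂ i = k then (1 : ℝ) else 0)
    (G₁ G₂ : Matrix (Fin K) (Fin K') ℝ)
    (hG₁ : ∀ k j, G₁ k j =
      ((Finset.univ.filter (fun i => h₁ i = k ∧ s i = j)).card : ℝ) /
      ((Finset.univ.filter (fun i => h₁ i = k)).card : ℝ))
    (hG₂ : ∀ k j, G₂ k j =
      ((Finset.univ.filter (fun i => h₂ i = k ∧ s i = j)).card : ℝ) /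
      ((Finset.univ.filter (fun i => h₂ i = k)).card : ℝ))
    (pj : Fin K' → ℝ)
    (hpj : ∀ j, pj j = ((Finset.univ.filter (fun i => s i = j)).card : ℝ) / (n' : ℝ))
    (Uc₁ Uc₂ : ℝ)
    (hUc₁ : Uc₁ =
      (∑ k, (((Finset.univ.filter (fun i => h₁ i = k)).card : ℝ) / (n' : ℝ)) *
        ∑ j, ((((Finset.univ.filter (fun i => h₁ i = k ∧ s i = j)).card : ℝ) / (n' : ℝ)) /
          (((Finset.univ.filter (fun i => h₁ i = k)).card : ℝ) / (n' : ℝ))) ^ 2)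
      - ∑ j, (pj j) ^ 2)
    (hUc₂ : Uc₂ =
      (∑ k, (((Finset.univ.filter (fun i => h₂ i = k)).card : ℝ) / (n' : ℝ)) *
        ∑ j, ((((Finset.univ.filter (fun i => h₂ i = k ∧ s i = j)).card : ℝ) / (n' : ℝ)) /
          (((Finset.univ.filter (fun i => h₂ i = k)).card : ℝ) / (n' : ℝ))) ^ 2)
      - ∑ j, (pj j) ^ 2) :
    Uc₁ ≥ Uc₂ ↔
      ∑ i, ∑ j, ((S - H₁ * G₁) i j) ^ 2 ≤ ∑ i, ∑ j, ((S - H₂ * G₂) i j) ^ 2 := by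
  have hMpos₁ : ∀ k : Fin K, 0 < (Finset.univ.filter (fun i => h₁ i = k)).card := by
    intro k
    obtain ⟨i, hi⟩ := hsurj₁ k
    exact Finset.card_pos.mpr ⟨i, Finset.mem_filter.mpr ⟨Finset.mem_univ i, hi⟩⟩
  have hMpos₂ : ∀ k : Fin K, 0 < (Finset.univ.filter (fun i => h₂ i = k)).card := by
    intro k
    obtain ⟨i, hi⟩ := hsurj₂ k
    exact Finset.card_pos.mpr ⟨i, Finset.mem_filter.mpr ⟨Finset.mem_univ i, hi⟩⟩
  have hn : (0 : ℝ) < (n' : ℝ) := by exact_mod_cast hn'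
  rw [hUc₁, hUc₂, uc_sum_eq hn' s h₁ hMpos₁, uc_sum_eq hn' s h₂ hMpos₂,
    frob_eq s h₁ S hS H₁ hH₁ G₁ hG₁ hMpos₁, frob_eq s h₂ S hS H₂ hH₂ G₂ hG₂ hMpos₂]
  constructor
  · intro hge
    have h1 : (∑ k, ∑ j, ((Finset.univ.filter (fun i => h₂ i = k ∧ s i = j)).card : ℝ) ^ 2 /
          ((Finset.univ.filter (fun i => h₂ i = k)).card : ℝ)) / (n' : ℝ) ≤
        (∑ k, ∑ j, ((Finset.univ.filter (fun i => h₁ i = k ∧ s i = j)).card : ℝ) ^ 2 /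
          ((Finset.univ.filter (fun i => h₁ i = k)).card : ℝ)) / (n' : ℝ) := by linarith
    have h2 := (div_le_div_iff_of_pos_right hn).mp h1
    linarith
  · intro hle
    have h2 : (∑ k, ∑ j, ((Finset.univ.filter (fun i => h₂ i = k ∧ s i = j)).card : ℝ) ^ 2 /
          ((Finset.univ.filter (fun i => h₂ i = k)).card : ℝ)) ≤
        (∑ k, ∑ j, ((Finset.univ.filter (fun i => h₁ i = k ∧ s i = j)).card : ℝ) ^ 2 /
          ((Finset.univ.filter (fun i => h₁ i = k)).card : ℝ)) := by linarith
    have h1 := (div_le_div_iff_of_pos_right hn).mpr h2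
    linarith
end

section
/- Let n' be a positive natural number, K, K' positive natural numbers, s : Fin n' → Fin K' a labeling, and h : Fin n' → Fin K a surjective partition assignment. Then the category utility function is nonnegative: U_c ≥ 0, i.e., Σ_{k=1}^{K} p_{k+} Σ_{j=1}^{K'} (p_{kj}/p_{k+})² ≥ Σ_{j=1}^{K'} (p_{+j})², so that a larger value of U_c corresponds to higher agreement between the partition and the labeling, with U_c = 0 at independence-like configurations. -/
/-- The category utility function is nonnegative: `U_c ≥ 0`, i.e.,
`Σ_k p_{k+} Σ_j (p_{kj}/p_{k+})² ≥ Σ_j (p_{+j})²`. -/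
theorem category_utility_nonneg
    (n' K K' : ℕ) (hn' : 0 < n') (hK : 0 < K) (hK' : 0 < K')
    (s : Fin n' → Fin K') (h : Fin n' → Fin K) (hsurj : Function.Surjective h)
    (nkj : Fin K → Fin K' → ℕ)
    (hnkj : ∀ k j, nkj k j = (Finset.univ.filter (fun i => h i = k ∧ s i = j)).card)
    (nk : Fin K → ℕ)
    (hnk : ∀ k, nk k = (Finset.univ.filter (fun i => h i = k)).card)
    (nj : Fin K' → ℕ)
    (hnj : ∀ j, nj j = (Finset.univ.filter (fun i => s i = j)).card)
    (pkj : Fin K → Fin K' → ℝ)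
    (hpkj : ∀ k j, pkj k j = (nkj k j : ℝ) / (n' : ℝ))
    (pk : Fin K → ℝ)
    (hpk : ∀ k, pk k = (nk k : ℝ) / (n' : ℝ))
    (pj : Fin K' → ℝ)
    (hpj : ∀ j, pj j = (nj j : ℝ) / (n' : ℝ))
    (Uc : ℝ)
    (hUc : Uc = (∑ k, pk k * ∑ j, (pkj k j / pk k) ^ 2) - ∑ j, (pj j) ^ 2) :
    0 ≤ Uc := by
  have hn'R : (0:ℝ) < (n' : ℝ) := by exact_mod_cast hn'
  -- pk k > 0
  have hpkpos : ∀ k, 0 < pk k := by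
    intro k
    rw [hpk, hnk]
    apply div_pos _ hn'R
    have : (Finset.univ.filter (fun i => h i = k)).Nonempty := by
      obtain ⟨i, hi⟩ := hsurj k
      exact ⟨i, by simp [hi]⟩
    exact_mod_cast Finset.card_pos.mpr this
  -- column sums
  have hcol : ∀ j, ∑ k, pkj k j = pj j := by
    intro j
    simp only [hpkj]
    rw [hpj, hnj, ← Finset.sum_div]
    congr 1
    have := Finset.card_eq_sum_card_fiberwise
      (f := h) (s := Finset.univ.filter (fun i => s i = j)) (t := Finset.univ)
      (fun i _ => Finset.mem_univ _)
    rw [this]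
    push_cast
    apply Finset.sum_congr rfl
    intro k _
    rw [hnkj]
    congr 1
    rw [Finset.filter_filter]
    congr 1
    ext i
    simp [and_comm]
  -- row sums total
  have hrow : ∑ k, pk k = 1 := by
    have hc : ∑ k, nk k = n' := by
      have := Finset.card_eq_sum_card_fiberwise
        (f := h) (s := (Finset.univ : Finset (Fin n'))) (t := Finset.univ)
        (fun i _ => Finset.mem_univ _)
      rw [Finset.card_univ, Fintype.card_fin] at this
      rw [this]
      exact Finset.sum_congr rfl fun k _ => hnk k
    simp only [hpk, ← Finset.sum_div]
    rw [← Nat.cast_sum, hc, div_self hn'R.ne']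
  rw [hUc, sub_nonneg]
  have hswap : (∑ k, pk k * ∑ j, (pkj k j / pk k) ^ 2) = ∑ j, ∑ k, (pkj k j) ^ 2 / pk k := by
    rw [Finset.sum_comm]
    apply Finset.sum_congr rfl
    intro k _
    rw [Finset.mul_sum]
    apply Finset.sum_congr rfl
    intro j _
    have h0 := (hpkpos k).ne'
    rw [div_pow, eq_div_iff h0]
    field_simp
  rw [hswap]
  apply Finset.sum_le_sum
  intro j _
  calc pj j ^ 2 = (∑ k, pkj k j) ^ 2 / ∑ k, pk k := by rw [hcol, hrow, div_one]
    _ ≤ ∑ k, (pkj k j) ^ 2 / pk k :=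
        Finset.sq_sum_div_le_sum_sq_div _ _ (fun k _ => hpkpos k)
end
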